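/- arXiv:2011.05094 — 3 statements merged into one kernel-verified Lean document; each statement's English description precedes it below -/
import Mathlib

section
/- Let a ≥ 2 be an integer. The additive submonoid S = {(m₁,m₂,k) ∈ ℤ³ : 0 ≤ m₂, m₂ ≤ k, 0 ≤ a·m₁ + m₂, and a·m₁ + m₂ ≤ k} of ℤ³ is equal to the additive submonoid of ℤ³ generated by the four vectors v₁ = (0,0,1), v₂ = (0,1,1), v₃ = (1,0,a), v₄ = (−1,a,a); that is, every element of S is a finite sum of copies of v₁, v₂, v₃, v₄, and conversely. -/
/-- For an integer `a ≥ 2`, the additive submonoid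
`S = {(m₁,m₂,k) ∈ ℤ³ : 0 ≤ m₂, m₂ ≤ k, 0 ≤ a m₁ + m₂, a m₁ + m₂ ≤ k}` coincides with the
additive submonoid of `ℤ³` generated by `(0,0,1)`, `(0,1,1)`, `(1,0,a)`, `(-1,a,a)`. -/
theorem stmt_1 (a : ℤ) (ha : 2 ≤ a) :
    (AddSubmonoid.closure ({(0, 0, 1), (0, 1, 1), (1, 0, a), (-1, a, a)} : Set (ℤ × ℤ × ℤ)) :
        Set (ℤ × ℤ × ℤ))
    = {p : ℤ × ℤ × ℤ |
        0 ≤ p.2.1 ∧ p.2.1 ≤ p.2.2 ∧ 0 ≤ a * p.1 + p.2.1 ∧ a * p.1 + p.2.1 ≤ p.2.2} := by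
  apply Set.Subset.antisymm
  · intro x hx
    induction hx using AddSubmonoid.closure_induction with
    | mem y hy =>
      simp only [Set.mem_insert_iff, Set.mem_singleton_iff] at hy
      rcases hy with rfl | rfl | rfl | rfl <;>
        refine ⟨?_, ?_, ?_, ?_⟩ <;> simp <;> nlinarith
    | zero => simp
    | add x y hx hy ihx ihy =>
      obtain ⟨a1, a2, a3, a4⟩ := ihx
      obtain ⟨b1, b2, b3, b4⟩ := ihy
      refine ⟨by simp; linarith, by simp; linarith, ?_, ?_⟩ <;>
        simp only [Prod.fst_add, Prod.snd_add] <;> nlinarith [mul_add a x.1 y.1]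
  · rintro ⟨m₁, m₂, k⟩ ⟨h1, h2, h3, h4⟩
    have hv1 : ((0:ℤ), (0:ℤ), (1:ℤ)) ∈
        AddSubmonoid.closure ({(0, 0, 1), (0, 1, 1), (1, 0, a), (-1, a, a)} : Set (ℤ × ℤ × ℤ)) :=
      AddSubmonoid.subset_closure (by simp)
    have hv2 : ((0:ℤ), (1:ℤ), (1:ℤ)) ∈
        AddSubmonoid.closure ({(0, 0, 1), (0, 1, 1), (1, 0, a), (-1, a, a)} : Set (ℤ × ℤ × ℤ)) :=
      AddSubmonoid.subset_closure (by simp)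
    have hv3 : ((1:ℤ), (0:ℤ), a) ∈
        AddSubmonoid.closure ({(0, 0, 1), (0, 1, 1), (1, 0, a), (-1, a, a)} : Set (ℤ × ℤ × ℤ)) :=
      AddSubmonoid.subset_closure (by simp)
    have hv4 : ((-1:ℤ), a, a) ∈
        AddSubmonoid.closure ({(0, 0, 1), (0, 1, 1), (1, 0, a), (-1, a, a)} : Set (ℤ × ℤ × ℤ)) :=
      AddSubmonoid.subset_closure (by simp)
    rcases le_or_gt 0 m₁ with hm | hm
    · have e : ((m₁, m₂, k) : ℤ × ℤ × ℤ)
        = (k - a * m₁ - m₂).toNat • ((0:ℤ), (0:ℤ), (1:ℤ)) + m₂.toNat • ((0:ℤ), (1:ℤ), (1:ℤ))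
          + m₁.toNat • ((1:ℤ), (0:ℤ), a) := by
        have e1 : ((k - a * m₁ - m₂).toNat : ℤ) = k - a * m₁ - m₂ :=
          Int.toNat_of_nonneg (by linarith)
        have e2 : (m₂.toNat : ℤ) = m₂ := Int.toNat_of_nonneg h1
        have e3 : (m₁.toNat : ℤ) = m₁ := Int.toNat_of_nonneg hm
        refine Prod.ext ?_ (Prod.ext ?_ ?_) <;>
          simp only [Prod.fst_add, Prod.snd_add, Prod.smul_fst, Prod.smul_snd] <;>
          norm_num [nsmul_eq_mul, e1, e2, e3] <;> ring
      rw [e]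
      exact add_mem (add_mem (nsmul_mem hv1 _) (nsmul_mem hv2 _)) (nsmul_mem hv3 _)
    · have e : ((m₁, m₂, k) : ℤ × ℤ × ℤ)
        = (k - m₂).toNat • ((0:ℤ), (0:ℤ), (1:ℤ)) + (m₂ + a * m₁).toNat • ((0:ℤ), (1:ℤ), (1:ℤ))
          + (-m₁).toNat • ((-1:ℤ), a, a) := by
        have e1 : ((k - m₂).toNat : ℤ) = k - m₂ := Int.toNat_of_nonneg (by linarith)
        have e2 : ((m₂ + a * m₁).toNat : ℤ) = m₂ + a * m₁ := Int.toNat_of_nonneg (by linarith)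
        have e3 : ((-m₁).toNat : ℤ) = -m₁ := Int.toNat_of_nonneg (by linarith)
        refine Prod.ext ?_ (Prod.ext ?_ ?_) <;>
          simp only [Prod.fst_add, Prod.snd_add, Prod.smul_fst, Prod.smul_snd] <;>
          norm_num [nsmul_eq_mul, e1, e2, e3] <;> ring
      rw [e]
      exact add_mem (add_mem (nsmul_mem hv1 _) (nsmul_mem hv2 _)) (nsmul_mem hv4 _)
end

section
/- Let a ≥ 2 be an integer and let S = {(m₁,m₂,k) ∈ ℤ³ : 0 ≤ m₂ ≤ k and 0 ≤ a·m₁ + m₂ ≤ k}. Then none of the four vectors v₁ = (0,0,1), v₂ = (0,1,1), v₃ = (1,0,a), v₄ = (−1,a,a) can be written as a sum s + s' with s, s' ∈ S and s ≠ 0 ≠ s'. Consequently {v₁, v₂, v₃, v₄} is the minimal generating set of the monoid S: any set of generators of S must contain all four vectors. -/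
private lemma mulz {a x : ℤ} (ha : 2 ≤ a) (h : a * x = 0) : x = 0 := by
  rcases mul_eq_zero.mp h with h | h
  · omega
  · exact h

private lemma aux_list (a : ℤ) (ha : 2 ≤ a) (G : Set (ℤ × ℤ × ℤ))
    (hG : (AddSubmonoid.closure G : Set (ℤ × ℤ × ℤ))
        = {p : ℤ × ℤ × ℤ |
            0 ≤ p.2.1 ∧ p.2.1 ≤ p.2.2 ∧ 0 ≤ a * p.1 + p.2.1 ∧ a * p.1 + p.2.1 ≤ p.2.2})
    (v : ℤ × ℤ × ℤ)
    (hind : ∀ s s' : ℤ × ℤ × ℤ,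
        (0 ≤ s.2.1 ∧ s.2.1 ≤ s.2.2 ∧ 0 ≤ a * s.1 + s.2.1 ∧ a * s.1 + s.2.1 ≤ s.2.2) →
        (0 ≤ s'.2.1 ∧ s'.2.1 ≤ s'.2.2 ∧ 0 ≤ a * s'.1 + s'.2.1 ∧ a * s'.1 + s'.2.1 ≤ s'.2.2) →
        s + s' = v → s = 0 ∨ s' = 0)
    (hv0 : v ≠ 0) :
    ∀ l : List (ℤ × ℤ × ℤ), (∀ y ∈ l, y ∈ G) → l.sum = v → v ∈ G := by
  intro l
  induction l with
  | nil => intro _ h; simp at h; exact absurd h.symm hv0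
  | cons g t ih =>
      intro hmem hsum
      have hg : g ∈ G := hmem g (List.mem_cons_self)
      have hgS : g ∈ {p : ℤ × ℤ × ℤ |
            0 ≤ p.2.1 ∧ p.2.1 ≤ p.2.2 ∧ 0 ≤ a * p.1 + p.2.1 ∧ a * p.1 + p.2.1 ≤ p.2.2} := by
        rw [← hG]; exact AddSubmonoid.subset_closure hg
      have htS : t.sum ∈ {p : ℤ × ℤ × ℤ |
            0 ≤ p.2.1 ∧ p.2.1 ≤ p.2.2 ∧ 0 ≤ a * p.1 + p.2.1 ∧ a * p.1 + p.2.1 ≤ p.2.2} := by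
        rw [← hG]
        exact AddSubmonoid.list_sum_mem _
          (fun x hx => AddSubmonoid.subset_closure (hmem x (List.mem_cons_of_mem g hx)))
      rw [List.sum_cons] at hsum
      rcases hind g t.sum hgS htS hsum with h | h
      · rw [h, zero_add] at hsum
        exact ih (fun y hy => hmem y (List.mem_cons_of_mem g hy)) hsum
      · rw [h, add_zero] at hsum
        rwa [hsum] at hg

/-- For an integer `a ≥ 2`, none of the four vectors `v₁ = (0,0,1)`, `v₂ = (0,1,1)`,
`v₃ = (1,0,a)`, `v₄ = (-1,a,a)` decomposes as a sum of two nonzero elements of the monoid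
`S = {(m₁,m₂,k) : 0 ≤ m₂ ≤ k, 0 ≤ a m₁ + m₂ ≤ k}`; consequently every subset of `ℤ³`
generating `S` as an additive monoid contains all four vectors. -/
theorem stmt_2 (a : ℤ) (ha : 2 ≤ a) :
    (∀ v ∈ ({(0, 0, 1), (0, 1, 1), (1, 0, a), (-1, a, a)} : Set (ℤ × ℤ × ℤ)),
      ∀ s s' : ℤ × ℤ × ℤ,
        (0 ≤ s.2.1 ∧ s.2.1 ≤ s.2.2 ∧ 0 ≤ a * s.1 + s.2.1 ∧ a * s.1 + s.2.1 ≤ s.2.2) →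
        (0 ≤ s'.2.1 ∧ s'.2.1 ≤ s'.2.2 ∧ 0 ≤ a * s'.1 + s'.2.1 ∧ a * s'.1 + s'.2.1 ≤ s'.2.2) →
        s + s' = v → s = 0 ∨ s' = 0) ∧
    (∀ G : Set (ℤ × ℤ × ℤ),
      (AddSubmonoid.closure G : Set (ℤ × ℤ × ℤ))
        = {p : ℤ × ℤ × ℤ |
            0 ≤ p.2.1 ∧ p.2.1 ≤ p.2.2 ∧ 0 ≤ a * p.1 + p.2.1 ∧ a * p.1 + p.2.1 ≤ p.2.2} →
      ({(0, 0, 1), (0, 1, 1), (1, 0, a), (-1, a, a)} : Set (ℤ × ℤ × ℤ)) ⊆ G) := by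
  have key : ∀ v ∈ ({(0, 0, 1), (0, 1, 1), (1, 0, a), (-1, a, a)} : Set (ℤ × ℤ × ℤ)),
      ∀ s s' : ℤ × ℤ × ℤ,
        (0 ≤ s.2.1 ∧ s.2.1 ≤ s.2.2 ∧ 0 ≤ a * s.1 + s.2.1 ∧ a * s.1 + s.2.1 ≤ s.2.2) →
        (0 ≤ s'.2.1 ∧ s'.2.1 ≤ s'.2.2 ∧ 0 ≤ a * s'.1 + s'.2.1 ∧ a * s'.1 + s'.2.1 ≤ s'.2.2) →
        s + s' = v → s = 0 ∨ s' = 0 := by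
    rintro v hv ⟨x, y, k⟩ ⟨x', y', k'⟩ ⟨h1, h2, h3, h4⟩ ⟨h1', h2', h3', h4'⟩ heq
    simp only [Set.mem_insert_iff, Set.mem_singleton_iff] at hv
    dsimp only at h1 h2 h3 h4 h1' h2' h3' h4'
    rcases hv with hv | hv | hv | hv <;> subst hv <;>
      simp only [Prod.mk_add_mk, Prod.mk.injEq] at heq <;>
      obtain ⟨e1, e2, e3⟩ := heq <;>
      simp only [Prod.mk_eq_zero]
    · -- v₁ = (0,0,1)
      rcases (by omega : k = 0 ∨ k' = 0) with h | h
      · left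
        have hy : y = 0 := by omega
        have hx : x = 0 := mulz ha (by omega)
        exact ⟨hx, hy, h⟩
      · right
        have hy : y' = 0 := by omega
        have hx : x' = 0 := mulz ha (by omega)
        exact ⟨hx, hy, h⟩
    · -- v₂ = (0,1,1)
      rcases (by omega : k = 0 ∨ k' = 0) with h | h
      · left
        have hy : y = 0 := by omega
        have hx : x = 0 := mulz ha (by omega)
        exact ⟨hx, hy, h⟩
      · right
        have hy : y' = 0 := by omega
        have hx : x' = 0 := mulz ha (by omega)
        exact ⟨hx, hy, h⟩
    · -- v₃ = (1,0,a)
      have hy : y = 0 := by omega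
      have hy' : y' = 0 := by omega
      have hu : a * x + a * x' = a := by
        have : a * (x + x') = a * 1 := by rw [e1]
        linarith [this, mul_add a x x', mul_one a]
      rcases le_or_gt x 0 with hx | hx
      · have hax : a * x ≤ 0 := mul_nonpos_of_nonneg_of_nonpos (by omega) hx
        left
        have hx0 : x = 0 := mulz ha (by omega)
        exact ⟨hx0, hy, by omega⟩
      · have hx' : x' ≤ 0 := by omega
        have hax' : a * x' ≤ 0 := mul_nonpos_of_nonneg_of_nonpos (by omega) hx'
        right
        have hx0 : x' = 0 := mulz ha (by omega)
        exact ⟨hx0, hy', by omega⟩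
    · -- v₄ = (-1,a,a)
      have hu : a * x + a * x' = -a := by
        have : a * (x + x') = a * (-1) := by rw [e1]
        linarith [this, mul_add a x x']
      have hw : a * x + y = 0 := by omega
      have hw' : a * x' + y' = 0 := by omega
      rcases le_or_gt x (-1) with hx | hx
      · have hax : a * x ≤ a * (-1) := by
          apply mul_le_mul_of_nonneg_left hx (by omega)
        right
        have hy : y = a := by omega
        have hy' : y' = 0 := by omega
        have hx0 : x' = 0 := mulz ha (by omega)
        exact ⟨hx0, hy', by omega⟩
      · have hax : 0 ≤ a * x := mul_nonneg (by omega) (by omega)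
        left
        have hy : y = 0 := by omega
        have hx0 : x = 0 := mulz ha (by omega)
        exact ⟨hx0, hy, by omega⟩
  refine ⟨key, fun G hG => ?_⟩
  intro v hv
  have hvS : v ∈ {p : ℤ × ℤ × ℤ |
      0 ≤ p.2.1 ∧ p.2.1 ≤ p.2.2 ∧ 0 ≤ a * p.1 + p.2.1 ∧ a * p.1 + p.2.1 ≤ p.2.2} := by
    rcases hv with h | h | h | h <;> subst h <;>
      refine ⟨?_, ?_, ?_, ?_⟩ <;> simp <;> omega
  have hv0 : v ≠ 0 := by
    rcases hv with h | h | h | h <;> subst h <;>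
      simp only [ne_eq, Prod.mk_eq_zero] <;> omega
  have hvc : v ∈ AddSubmonoid.closure G := by rw [← SetLike.mem_coe, hG]; exact hvS
  obtain ⟨l, hl, hsum⟩ := AddSubmonoid.exists_list_of_mem_closure hvc
  exact aux_list a ha G hG v (key v hv) hv0 l hl hsum
end

section
/- Let a ≥ 2 be an integer. Consider the ℂ-algebra homomorphism φ from the polynomial ring ℂ[x,y,z,w] to the group algebra ℂ[ℤ³] (the algebra AddMonoidAlgebra ℂ (ℤ × ℤ × ℤ), i.e. Laurent polynomials in three variables) defined by sending x to the monomial with exponent (0,0,1), y to the monomial with exponent (0,1,1), z to the monomial with exponent (1,0,a), and w to the monomial with exponent (−1,a,a), each with coefficient 1. Then the kernel of φ is the principal ideal generated by z·w − x^a·y^a. -/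
open MvPolynomial

namespace Stmt3Aux

noncomputable section

def V (a : ℕ) : Fin 4 → AddMonoidAlgebra ℂ (ℤ × ℤ × ℤ) :=
  ![AddMonoidAlgebra.single ((0 : ℤ), (0 : ℤ), (1 : ℤ)) (1 : ℂ),
    AddMonoidAlgebra.single ((0 : ℤ), (1 : ℤ), (1 : ℤ)) (1 : ℂ),
    AddMonoidAlgebra.single ((1 : ℤ), (0 : ℤ), (a : ℤ)) (1 : ℂ),
    AddMonoidAlgebra.single ((-1 : ℤ), (a : ℤ), (a : ℤ)) (1 : ℂ)]

def E (a : ℕ) (d : Fin 4 →₀ ℕ) : ℤ × ℤ × ℤ :=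
  ((d 2 : ℤ) - d 3, (d 1 : ℤ) + a * d 3,
    (d 0 : ℤ) + d 1 + a * d 2 + a * d 3)

lemma aeval_monomial_eq (a : ℕ) (d : Fin 4 →₀ ℕ) (c : ℂ) :
    aeval (V a) (monomial d c) = AddMonoidAlgebra.single (E a d) c := by
  rw [aeval_monomial, Finsupp.prod_fintype _ _ (fun i => pow_zero _), Fin.prod_univ_four]
  simp only [V, Matrix.cons_val_zero, Matrix.cons_val_one, Matrix.head_cons,
    Matrix.cons_val_two, Matrix.tail_cons, Matrix.cons_val_three,
    AddMonoidAlgebra.single_pow, one_pow, AddMonoidAlgebra.single_mul_single, mul_one]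
  rw [Algebra.algebraMap_eq_smul_one, smul_mul_assoc, one_mul, AddMonoidAlgebra.smul_single,
    smul_eq_mul, mul_one]
  congr 1
  simp only [Prod.smul_mk, Prod.mk_add_mk, smul_eq_mul, E, Prod.mk.injEq]
  refine ⟨by ring, by ring, by ring⟩

def nf (a : ℕ) (d : Fin 4 →₀ ℕ) : Fin 4 →₀ ℕ :=
  Finsupp.single 0 (d 0 + a * min (d 2) (d 3)) + Finsupp.single 1 (d 1 + a * min (d 2) (d 3))
    + Finsupp.single 2 (d 2 - min (d 2) (d 3)) + Finsupp.single 3 (d 3 - min (d 2) (d 3))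

lemma nf_apply (a : ℕ) (d : Fin 4 →₀ ℕ) :
    nf a d 0 = d 0 + a * min (d 2) (d 3) ∧ nf a d 1 = d 1 + a * min (d 2) (d 3) ∧
    nf a d 2 = d 2 - min (d 2) (d 3) ∧ nf a d 3 = d 3 - min (d 2) (d 3) := by
  refine ⟨?_, ?_, ?_, ?_⟩ <;> simp [nf, Finsupp.single_apply]

lemma nf_norm (a : ℕ) (d : Fin 4 →₀ ℕ) : nf a d 2 = 0 ∨ nf a d 3 = 0 := by
  obtain ⟨-, -, h2, h3⟩ := nf_apply a d
  omega

lemma mono (d : Fin 4 →₀ ℕ) :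
    (monomial d (1:ℂ)) = X 0 ^ d 0 * X 1 ^ d 1 * X 2 ^ d 2 * X 3 ^ d 3 := by
  rw [monomial_eq, C_1, one_mul, Finsupp.prod_fintype _ _ (fun i => pow_zero _),
    Fin.prod_univ_four]

lemma key_dvd (a : ℕ) (d : Fin 4 →₀ ℕ) :
    (X 2 * X 3 - X 0 ^ a * X 1 ^ a : MvPolynomial (Fin 4) ℂ) ∣
      monomial d 1 - monomial (nf a d) 1 := by
  obtain ⟨h0, h1, h2, h3⟩ := nf_apply a d
  rw [mono, mono, h0, h1, h2, h3]
  set m := min (d 2) (d 3) with hm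
  obtain ⟨k2, hk2⟩ : ∃ k, d 2 = k + m := ⟨d 2 - m, by omega⟩
  obtain ⟨k3, hk3⟩ : ∃ k, d 3 = k + m := ⟨d 3 - m, by omega⟩
  have e2 : d 2 - m = k2 := by omega
  have e3 : d 3 - m = k3 := by omega
  rw [e2, e3, hk2, hk3]
  have heq : (X 0 ^ d 0 * X 1 ^ d 1 * X 2 ^ (k2 + m) * X 3 ^ (k3 + m)
      - X 0 ^ (d 0 + a * m) * X 1 ^ (d 1 + a * m) * X 2 ^ k2 * X 3 ^ k3 :
        MvPolynomial (Fin 4) ℂ)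
      = (X 0 ^ d 0 * X 1 ^ d 1 * X 2 ^ k2 * X 3 ^ k3) *
        ((X 2 * X 3) ^ m - (X 0 ^ a * X 1 ^ a) ^ m) := by
    simp only [pow_add, pow_mul, mul_pow]
    ring
  rw [heq]
  exact Dvd.dvd.mul_left (sub_dvd_pow_sub_pow _ _ m) _

lemma E_injOn (a : ℕ) {d d' : Fin 4 →₀ ℕ} (h : d 2 = 0 ∨ d 3 = 0)
    (h' : d' 2 = 0 ∨ d' 3 = 0) (he : E a d = E a d') : d = d' := by
  have e1 : (d 2 : ℤ) - d 3 = (d' 2 : ℤ) - d' 3 := congrArg Prod.fst he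
  have e2 : (d 1 : ℤ) + a * d 3 = (d' 1 : ℤ) + a * d' 3 :=
    congrArg Prod.fst (congrArg Prod.snd he)
  have e3 : (d 0 : ℤ) + d 1 + a * d 2 + a * d 3
      = (d' 0 : ℤ) + d' 1 + a * d' 2 + a * d' 3 :=
    congrArg Prod.snd (congrArg Prod.snd he)
  have h2 : d 2 = d' 2 := by omega
  have h3 : d 3 = d' 3 := by omega
  rw [h3] at e2
  have h1 : d 1 = d' 1 := by exact_mod_cast add_right_cancel e2
  rw [h1, h2, h3] at e3
  have h0 : d 0 = d' 0 := by
    have : (d 0 : ℤ) = d' 0 := by linarith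
    exact_mod_cast this
  ext i
  fin_cases i <;> assumption

lemma E_nf (a : ℕ) (d : Fin 4 →₀ ℕ) : E a (nf a d) = E a d := by
  obtain ⟨h0, h1, h2, h3⟩ := nf_apply a d
  have hm2 : min (d 2) (d 3) ≤ d 2 := min_le_left _ _
  have hm3 : min (d 2) (d 3) ≤ d 3 := min_le_right _ _
  simp only [E, h0, h1, h2, h3, Prod.mk.injEq]
  push_cast [Nat.cast_sub hm2, Nat.cast_sub hm3]
  refine ⟨by ring, by ring, by ring⟩

lemma span_le_ker (a : ℕ) :
    Ideal.span {(X 2 * X 3 - X 0 ^ a * X 1 ^ a : MvPolynomial (Fin 4) ℂ)}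
      ≤ RingHom.ker (aeval (V a) : MvPolynomial (Fin 4) ℂ →ₐ[ℂ] _) := by
  rw [Ideal.span_le, Set.singleton_subset_iff]
  set d : Fin 4 →₀ ℕ := Finsupp.single 2 1 + Finsupp.single 3 1 with hd
  have hdv : ∀ i : Fin 4, d i = if i = 2 then 1 else if i = 3 then 1 else 0 := by
    intro i; fin_cases i <;> simp [hd, Finsupp.single_apply]
  have h2 : d 2 = 1 := by rw [hdv]; norm_num
  have h3 : d 3 = 1 := by rw [hdv]; norm_num
  have h0 : d 0 = 0 := by rw [hdv]; decide
  have h1 : d 1 = 0 := by rw [hdv]; decide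
  have hfd : (X 2 * X 3 - X 0 ^ a * X 1 ^ a : MvPolynomial (Fin 4) ℂ)
      = monomial d 1 - monomial (nf a d) 1 := by
    obtain ⟨n0, n1, n2, n3⟩ := nf_apply a d
    rw [mono, mono, h0, h1, h2, h3, n0, n1, n2, n3, h0, h1, h2, h3]
    norm_num
  have : aeval (V a) (X 2 * X 3 - X 0 ^ a * X 1 ^ a : MvPolynomial (Fin 4) ℂ) = 0 := by
    rw [hfd, map_sub, aeval_monomial_eq, aeval_monomial_eq, E_nf, sub_self]
  exact this

theorem main (a : ℕ) :
    RingHom.ker (aeval (V a) : MvPolynomial (Fin 4) ℂ →ₐ[ℂ] _)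
    = Ideal.span {(X 2 * X 3 - X 0 ^ a * X 1 ^ a : MvPolynomial (Fin 4) ℂ)} := by
  refine le_antisymm ?_ (span_le_ker a)
  intro p hp
  have hp0 : aeval (V a) p = 0 := hp
  set q : MvPolynomial (Fin 4) ℂ :=
    ∑ d ∈ p.support, monomial (nf a d) (coeff d p) with hqdef
  have hpq : p - q ∈ Ideal.span {(X 2 * X 3 - X 0 ^ a * X 1 ^ a : MvPolynomial (Fin 4) ℂ)} := by
    have hrw : p - q = ∑ d ∈ p.support,
        (monomial d (coeff d p) - monomial (nf a d) (coeff d p)) := by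
      rw [Finset.sum_sub_distrib, ← as_sum p, ← hqdef]
    rw [hrw]
    refine Ideal.sum_mem _ fun d _ => ?_
    rw [Ideal.mem_span_singleton]
    have : monomial d (coeff d p) - monomial (nf a d) (coeff d p)
        = C (coeff d p) * (monomial d 1 - monomial (nf a d) 1) := by
      rw [mul_sub, C_mul_monomial, C_mul_monomial, mul_one]
    rw [this]
    exact Dvd.dvd.mul_left (key_dvd a d) _
  have hq0 : aeval (V a) q = 0 := by
    have := span_le_ker a hpq
    have h2 : aeval (V a) (p - q) = 0 := this
    rw [map_sub, hp0, zero_sub, neg_eq_zero] at h2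
    exact h2
  have hsupp : ∀ e ∈ q.support, e 2 = 0 ∨ e 3 = 0 := by
    intro e he
    by_contra hcon
    push_neg at hcon
    have : coeff e q = 0 := by
      rw [hqdef, coeff_sum]
      refine Finset.sum_eq_zero fun d _ => ?_
      rw [coeff_monomial, if_neg]
      intro hne
      rcases nf_norm a d with h | h <;> rw [hne] at h <;> omega
    exact (mem_support_iff.mp he) this
  have hq : q = 0 := by
    by_contra hqne
    obtain ⟨d₀, hd₀⟩ := Finset.nonempty_of_ne_empty
      (fun h => hqne (support_eq_empty.mp h))
    have hqeval : aeval (V a) q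
        = ∑ d ∈ q.support, AddMonoidAlgebra.single (E a d) (coeff d q) := by
      conv_lhs => rw [as_sum q]
      rw [map_sum]
      exact Finset.sum_congr rfl fun d _ => aeval_monomial_eq a d _
    have heval : (aeval (V a) q).coeff (E a d₀) = coeff d₀ q := by
      rw [hqeval, AddMonoidAlgebra.coeff_sum]
      rw [Finsupp.finset_sum_apply]
      rw [Finset.sum_eq_single_of_mem d₀ hd₀]
      · rw [AddMonoidAlgebra.coeff_single, Finsupp.single_apply, if_pos rfl]
      · intro d hd hne
        rw [AddMonoidAlgebra.coeff_single, Finsupp.single_apply, if_neg]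
        intro hEeq
        exact hne (E_injOn a (hsupp d hd) (hsupp d₀ hd₀) hEeq)
    rw [hq0] at heval
    exact (mem_support_iff.mp hd₀) heval.symm
  have : p = p - q := by rw [hq, sub_zero]
  rw [this]
  exact hpq

end

end Stmt3Aux

/-- For an integer `a ≥ 2`, the kernel of the ℂ-algebra map
`ℂ[x,y,z,w] → ℂ[ℤ³]` sending `x, y, z, w` to the Laurent monomials with exponents
`(0,0,1)`, `(0,1,1)`, `(1,0,a)`, `(-1,a,a)` is the principal ideal
generated by `z·w − xᵃ·yᵃ`. -/
theorem stmt_3 (a : ℕ) (ha : 2 ≤ a) :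
    RingHom.ker
      (MvPolynomial.aeval
        (![AddMonoidAlgebra.single ((0 : ℤ), (0 : ℤ), (1 : ℤ)) (1 : ℂ),
           AddMonoidAlgebra.single ((0 : ℤ), (1 : ℤ), (1 : ℤ)) (1 : ℂ),
           AddMonoidAlgebra.single ((1 : ℤ), (0 : ℤ), (a : ℤ)) (1 : ℂ),
           AddMonoidAlgebra.single ((-1 : ℤ), (a : ℤ), (a : ℤ)) (1 : ℂ)] :
          Fin 4 → AddMonoidAlgebra ℂ (ℤ × ℤ × ℤ)) :
        MvPolynomial (Fin 4) ℂ →ₐ[ℂ] AddMonoidAlgebra ℂ (ℤ × ℤ × ℤ))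
    = Ideal.span {(X 2 * X 3 - X 0 ^ a * X 1 ^ a : MvPolynomial (Fin 4) ℂ)} := by
  exact Stmt3Aux.main a
end
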